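/- Let θ ∈ ℝ and let c₁, …, c_r ∈ [−1, 1]. Let d₊ be the number of indices m with c_m > 0 and d₋ the number of indices m with c_m < 0. Set a := 1 + 2·min(d₊, d₋), b := 2·|d₊ − d₋| and f := 2·max(d₊, d₋). Then B_r := |1 − e^{−2iθ}|² · ∏_{m=1}^r |1 − c_m·e^{iθ}|⁴ satisfies B_r ≤ max( 4^{2a+b} · a^a · (a+b)^{a+b} / (2a+b)^{2a+b} , 4^{2+f} · (1+f)^{1+f} / (2+f)^{2+f} ). -/

import Mathlib

set_option maxHeartbeats 1000000

open Finset

lemma amgm2 (u v : ℝ) (p q : ℕ) (hu : 0 ≤ u) (hv : 0 ≤ v) (huv : u + v = 2)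
    (hp : 0 < p) (hq : 0 < q) :
    u ^ p * v ^ q ≤ 2 ^ (p + q) * ((p : ℝ) ^ p * (q : ℝ) ^ q) / ((p + q : ℕ) : ℝ) ^ (p + q) := by
  set n : ℝ := ((p + q : ℕ) : ℝ) with hn
  have hn0 : (0:ℝ) < n := by positivity
  have hp0 : (0:ℝ) < (p:ℝ) := by positivity
  have hq0 : (0:ℝ) < (q:ℝ) := by positivity
  set w₁ : ℝ := p / n
  set w₂ : ℝ := q / n
  have hw : w₁ + w₂ = 1 := by
    simp only [w₁, w₂]; rw [← add_div, hn, Nat.cast_add, div_self]; positivity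
  set z₁ : ℝ := u * n / p
  set z₂ : ℝ := v * n / q
  have hz₁ : 0 ≤ z₁ := by positivity
  have hz₂ : 0 ≤ z₂ := by positivity
  have key : z₁ ^ w₁ * z₂ ^ w₂ ≤ 2 := by
    have := Real.geom_mean_le_arith_mean2_weighted (by positivity : (0:ℝ) ≤ w₁)
      (by positivity : (0:ℝ) ≤ w₂) hz₁ hz₂ hw
    calc z₁ ^ w₁ * z₂ ^ w₂ ≤ w₁ * z₁ + w₂ * z₂ := this
      _ = u + v := by simp only [w₁, w₂, z₁, z₂]; field_simp
      _ = 2 := huv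
  have key2 : (z₁ ^ w₁ * z₂ ^ w₂) ^ (p + q : ℕ) ≤ 2 ^ (p + q : ℕ) :=
    pow_le_pow_left₀ (by positivity) key _
  have hzz : (z₁ ^ w₁ * z₂ ^ w₂) ^ (p + q : ℕ) = z₁ ^ p * z₂ ^ q := by
    rw [mul_pow, ← Real.rpow_natCast (z₁ ^ w₁), ← Real.rpow_natCast (z₂ ^ w₂),
      ← Real.rpow_mul hz₁, ← Real.rpow_mul hz₂]
    have e1 : w₁ * (p + q : ℕ) = (p : ℝ) := by simp only [w₁]; rw [← hn]; field_simp
    have e2 : w₂ * (p + q : ℕ) = (q : ℝ) := by simp only [w₂]; rw [← hn]; field_simp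
    rw [e1, e2, Real.rpow_natCast, Real.rpow_natCast]
  rw [hzz] at key2
  have expand : z₁ ^ p * z₂ ^ q = u ^ p * v ^ q * n ^ (p+q) / ((p:ℝ)^p * (q:ℝ)^q) := by
    simp only [z₁, z₂, div_pow, mul_pow]
    field_simp
    ring
  rw [expand, div_le_iff₀ (by positivity)] at key2
  rw [le_div_iff₀ (by positivity)]
  nlinarith [key2]

lemma key_real (u v : ℝ) (hu : 0 ≤ u) (hv : 0 ≤ v) (huv : u + v = 2)
    (dpos dneg a b f : ℕ)
    (ha : a = 1 + 2 * min dpos dneg)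
    (hab : a + b = 1 + 2 * max dpos dneg)
    (hf : f = 2 * max dpos dneg) :
    4 * u * v * (max 1 (2*u)) ^ (2*dpos) * (max 1 (2*v)) ^ (2*dneg) ≤
    max ((4:ℝ) ^ (2*a+b) * (a:ℝ)^a * ((a:ℝ)+(b:ℝ))^(a+b) / ((2*a+b : ℕ):ℝ)^(2*a+b))
        ((4:ℝ) ^ (2+f) * ((1:ℝ)+(f:ℝ))^(1+f) / ((2+f : ℕ):ℝ)^(2+f)) := by
  rcases le_or_gt 1 (2*u) with h1u | h1u
  · rcases le_or_gt 1 (2*v) with h1v | h1v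
    · -- Case A : first term
      refine le_trans ?_ (le_max_left _ _)
      rw [max_eq_right h1u, max_eq_right h1v]
      set p := 1 + 2*dpos with hpdef
      set q := 1 + 2*dneg with hqdef
      have hpq : p + q = 2*a+b := by omega
      have hcast : ((p:ℕ):ℝ)^p * ((q:ℕ):ℝ)^q = (a:ℝ)^a * ((a:ℝ)+(b:ℝ))^(a+b) := by
        have habR : ((a:ℝ)+(b:ℝ)) = ((a+b : ℕ):ℝ) := by push_cast; ring
        rcases le_total dpos dneg with h | h
        · have hpa : p = a := by omega
          have hqab : q = a + b := by omega
          rw [hpa, hqab, habR]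
        · have hpa : p = a + b := by omega
          have hqab : q = a := by omega
          rw [hpa, hqab, habR]; ring
      have hmain := amgm2 u v p q hu hv huv (by omega) (by omega)
      rw [hpq, hcast] at hmain
      calc 4 * u * v * (2*u) ^ (2*dpos) * (2*v) ^ (2*dneg)
          = 2^(2*a+b) * (u^p * v^q) := by
            rw [mul_pow, mul_pow, hpdef, hqdef]
            have : (2:ℝ)^(2*a+b) = 4 * 2^(2*dpos) * 2^(2*dneg) := by
              rw [← hpq]; rw [hpdef, hqdef]; ring
            rw [this]; ring
        _ ≤ 2^(2*a+b) * (2 ^ (2*a+b) * ((a:ℝ)^a * ((a:ℝ)+(b:ℝ))^(a+b)) / ((2*a+b : ℕ):ℝ)^(2*a+b)) :=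
            mul_le_mul_of_nonneg_left hmain (by positivity)
        _ = (4:ℝ) ^ (2*a+b) * (a:ℝ)^a * ((a:ℝ)+(b:ℝ))^(a+b) / ((2*a+b : ℕ):ℝ)^(2*a+b) := by
            rw [show (4:ℝ)^(2*a+b) = 2^(2*a+b)*2^(2*a+b) by rw [← mul_pow]; norm_num]
            ring
    · -- Case C : 2v < 1, so u ≥ 3/2
      refine le_trans ?_ (le_max_right _ _)
      rw [max_eq_right h1u, max_eq_left h1v.le]
      have hpow : (2*u) ^ (2*dpos) ≤ (2*u) ^ f :=
        pow_le_pow_right₀ h1u (by omega)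
      have hmain := amgm2 v u 1 (1+f) hv hu (by linarith) one_pos (by omega)
      calc 4 * u * v * (2*u) ^ (2*dpos) * 1 ^ (2*dneg)
          = 4 * u * v * (2*u) ^ (2*dpos) := by rw [one_pow, mul_one]
        _ ≤ 4 * u * v * (2*u) ^ f := mul_le_mul_of_nonneg_left hpow (by positivity)
        _ = 2^(2+f) * (v^1 * u^(1+f)) := by
            rw [mul_pow]
            have : (2:ℝ)^(2+f) = 4 * 2^f := by rw [pow_add]; norm_num
            rw [this]; ring
        _ ≤ 2^(2+f) * (2 ^ (1+(1+f)) * (((1:ℕ):ℝ)^1 * ((1+f:ℕ):ℝ)^(1+f)) / ((1+(1+f) : ℕ):ℝ)^(1+(1+f))) :=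
            mul_le_mul_of_nonneg_left hmain (by positivity)
        _ = (4:ℝ) ^ (2+f) * ((1:ℝ)+(f:ℝ))^(1+f) / ((2+f : ℕ):ℝ)^(2+f) := by
            have e1 : 1+(1+f) = 2+f := by omega
            rw [e1, show (4:ℝ) = 2*2 by norm_num, mul_pow]
            push_cast
            ring
  · -- Case B : 2u < 1, so v ≥ 3/2
    refine le_trans ?_ (le_max_right _ _)
    have h2v : (1:ℝ) ≤ 2*v := by linarith
    rw [max_eq_left h1u.le, max_eq_right h2v]
    have hpow : (2*v) ^ (2*dneg) ≤ (2*v) ^ f :=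
      pow_le_pow_right₀ h2v (by omega)
    have hmain := amgm2 u v 1 (1+f) hu hv huv one_pos (by omega)
    calc 4 * u * v * 1 ^ (2*dpos) * (2*v) ^ (2*dneg)
        = 4 * u * v * (2*v) ^ (2*dneg) := by rw [one_pow]; ring
      _ ≤ 4 * u * v * (2*v) ^ f := mul_le_mul_of_nonneg_left hpow (by positivity)
      _ = 2^(2+f) * (u^1 * v^(1+f)) := by
          rw [mul_pow]
          have : (2:ℝ)^(2+f) = 4 * 2^f := by rw [pow_add]; norm_num
          rw [this]; ring
      _ ≤ 2^(2+f) * (2 ^ (1+(1+f)) * (((1:ℕ):ℝ)^1 * ((1+f:ℕ):ℝ)^(1+f)) / ((1+(1+f) : ℕ):ℝ)^(1+(1+f))) :=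
          mul_le_mul_of_nonneg_left hmain (by positivity)
      _ = (4:ℝ) ^ (2+f) * ((1:ℝ)+(f:ℝ))^(1+f) / ((2+f : ℕ):ℝ)^(2+f) := by
          have e1 : 1+(1+f) = 2+f := by omega
          rw [e1, show (4:ℝ) = 2*2 by norm_num, mul_pow]
          push_cast
          ring

theorem B_r_bound (r : ℕ) (θ : ℝ) (c : Fin r → ℝ)
    (hc : ∀ m, c m ∈ Set.Icc (-1 : ℝ) 1)
    (dpos dneg : ℕ)
    (hdpos : dpos = (Finset.univ.filter (fun m : Fin r => 0 < c m)).card)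
    (hdneg : dneg = (Finset.univ.filter (fun m : Fin r => c m < 0)).card)
    (a b f : ℕ)
    (ha : a = 1 + 2 * min dpos dneg)
    (hb : (b : ℤ) = 2 * |(dpos : ℤ) - (dneg : ℤ)|)
    (hf : f = 2 * max dpos dneg) :
    ‖1 - Complex.exp (-2 * θ * Complex.I)‖ ^ 2 *
      ∏ m : Fin r, ‖1 - (c m : ℂ) * Complex.exp (θ * Complex.I)‖ ^ 4 ≤
    max ((4 : ℝ) ^ (2 * a + b) * (a : ℝ) ^ a * ((a : ℝ) + b) ^ (a + b) /
          ((2 * a + b : ℕ) : ℝ) ^ (2 * a + b))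
        ((4 : ℝ) ^ (2 + f) * ((1 : ℝ) + f) ^ (1 + f) / ((2 + f : ℕ) : ℝ) ^ (2 + f)) := by
  -- derive hab
  have hab : a + b = 1 + 2 * max dpos dneg := by
    have h1 : ((max dpos dneg : ℕ) : ℤ) - ((min dpos dneg : ℕ) : ℤ)
        = |(dpos:ℤ) - (dneg:ℤ)| := by
      push_cast
      rw [abs_sub_comm]
      exact max_sub_min_eq_abs _ _
    have hb2 : (b:ℤ) = 2 * ((max dpos dneg : ℕ) : ℤ) - 2 * ((min dpos dneg : ℕ) : ℤ) := by
      rw [hb, ← h1]; ring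
    omega
  set x := Real.cos θ with hxdef
  have hxl : -1 ≤ x := Real.neg_one_le_cos θ
  have hxu : x ≤ 1 := Real.cos_le_one θ
  -- first factor
  have hexp : ‖1 - Complex.exp (-2 * θ * Complex.I)‖ ^ 2
      = 4 * (1 - x) * (1 + x) := by
    have h : (-2 * (θ:ℂ) * Complex.I) = ((-2*θ : ℝ):ℂ) * Complex.I := by push_cast; ring
    have hre : (Complex.exp (-2 * (θ:ℂ) * Complex.I)).re = Real.cos (-2*θ) := by
      rw [h]; exact Complex.exp_ofReal_mul_I_re _
    have him : (Complex.exp (-2 * (θ:ℂ) * Complex.I)).im = Real.sin (-2*θ) := by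
      rw [h]; exact Complex.exp_ofReal_mul_I_im _
    rw [Complex.sq_norm, Complex.normSq_apply, Complex.sub_re, Complex.sub_im,
      Complex.one_re, Complex.one_im, hre, him]
    have h2 : Real.cos (-2*θ) = 2 * Real.cos θ ^ 2 - 1 := by
      rw [show -2*θ = -(2*θ) by ring, Real.cos_neg, show 2*θ = θ+θ by ring, Real.cos_add]
      nlinarith [Real.sin_sq_add_cos_sq θ]
    nlinarith [Real.sin_sq_add_cos_sq (-2*θ), h2]
  -- factors
  have hfac : ∀ m : Fin r, ‖1 - (c m : ℂ) * Complex.exp (θ * Complex.I)‖ ^ 4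
      = (1 - 2*(c m)*x + (c m)^2)^2 := by
    intro m
    have h2 : ‖1 - (c m : ℂ) * Complex.exp (θ * Complex.I)‖ ^ 2
        = 1 - 2*(c m)*x + (c m)^2 := by
      rw [Complex.sq_norm, Complex.normSq_apply, Complex.sub_re, Complex.sub_im,
        Complex.one_re, Complex.one_im, Complex.mul_re, Complex.mul_im,
        Complex.ofReal_re, Complex.ofReal_im,
        Complex.exp_ofReal_mul_I_re, Complex.exp_ofReal_mul_I_im]
      have := Real.sin_sq_add_cos_sq θ
      linear_combination (c m)^2 * this
    calc ‖1 - (c m : ℂ) * Complex.exp (θ * Complex.I)‖ ^ 4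
        = (‖1 - (c m : ℂ) * Complex.exp (θ * Complex.I)‖ ^ 2) ^ 2 := by ring
      _ = (1 - 2*(c m)*x + (c m)^2)^2 := by rw [h2]
  set Mp : ℝ := max 1 (2*(1-x)) with hMp
  set Mm : ℝ := max 1 (2*(1+x)) with hMm
  have hMp1 : (1:ℝ) ≤ Mp := le_max_left _ _
  have hMm1 : (1:ℝ) ≤ Mm := le_max_left _ _
  -- product bound
  have hprod : ∏ m : Fin r, (1 - 2*(c m)*x + (c m)^2)^2
      ≤ Mp ^ (2*dpos) * Mm ^ (2*dneg) := by
    calc ∏ m : Fin r, (1 - 2*(c m)*x + (c m)^2)^2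
        ≤ ∏ m : Fin r, (Mp ^ (if 0 < c m then 2 else 0) * Mm ^ (if c m < 0 then 2 else 0)) := by
          apply Finset.prod_le_prod
          · intro m _; positivity
          · intro m _
            obtain ⟨hcl, hcu⟩ := hc m
            rcases lt_trichotomy (c m) 0 with h | h | h
            · rw [if_neg (by linarith), if_pos h, pow_zero, one_mul]
              have hbase : 0 ≤ 1 - 2*(c m)*x + (c m)^2 := by nlinarith
              have hle : 1 - 2*(c m)*x + (c m)^2 ≤ Mm := by
                rcases le_or_gt x (-1/2) with hx2 | hx2
                · refine le_max_of_le_left ?_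
                  nlinarith [mul_nonneg (by linarith : (0:ℝ) ≤ -(c m)) (by linarith : (0:ℝ) ≤ -(2*x)-1)]
                · refine le_max_of_le_right ?_
                  nlinarith [mul_nonneg (by linarith : (0:ℝ) ≤ 1 + c m) (by linarith : (0:ℝ) ≤ 1 - c m + 2*x)]
              exact pow_le_pow_left₀ hbase hle 2
            · simp [h]
            · rw [if_pos h, if_neg (by linarith), pow_zero, mul_one]
              have hbase : 0 ≤ 1 - 2*(c m)*x + (c m)^2 := by nlinarith
              have hle : 1 - 2*(c m)*x + (c m)^2 ≤ Mp := by
                rcases le_or_gt (1/2 : ℝ) x with hx2 | hx2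
                · refine le_max_of_le_left ?_
                  nlinarith [mul_nonneg h.le (by linarith : (0:ℝ) ≤ 2*x-1)]
                · refine le_max_of_le_right ?_
                  nlinarith [mul_nonneg (by linarith : (0:ℝ) ≤ 1 - c m) (by linarith : (0:ℝ) ≤ 1 + c m - 2*x)]
              exact pow_le_pow_left₀ hbase hle 2
      _ = Mp ^ (2*dpos) * Mm ^ (2*dneg) := by
          rw [Finset.prod_mul_distrib, Finset.prod_pow_eq_pow_sum, Finset.prod_pow_eq_pow_sum]
          congr 1
          · congr 1
            rw [← Finset.sum_filter, Finset.sum_const, smul_eq_mul, hdpos]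
            ring
          · congr 1
            rw [← Finset.sum_filter, Finset.sum_const, smul_eq_mul, hdneg]
            ring
  -- assemble
  have hA : (0:ℝ) ≤ 4 * (1 - x) * (1 + x) := by nlinarith
  rw [hexp, Finset.prod_congr rfl (fun m _ => hfac m)]
  calc 4 * (1 - x) * (1 + x) * ∏ m : Fin r, (1 - 2*(c m)*x + (c m)^2)^2
      ≤ 4 * (1 - x) * (1 + x) * (Mp ^ (2*dpos) * Mm ^ (2*dneg)) :=
        mul_le_mul_of_nonneg_left hprod hA
    _ = 4 * (1-x) * (1+x) * (max 1 (2*(1-x))) ^ (2*dpos) * (max 1 (2*(1+x))) ^ (2*dneg) := by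
        rw [hMp, hMm]; ring
    _ ≤ _ := key_real (1-x) (1+x) (by linarith) (by linarith) (by ring) dpos dneg a b f ha hab hf
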